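/- Let x, y ∈ R^q with x ≠ y modulo the all-ones vector, and let D = d_tr(x,y). Let U_i be the set of coordinates on which x − y takes one of its i largest distinct values, for i = 1, ..., k where x − y takes k+1 distinct values. Then x − y = c·1 + Σ_{i=1}^k γ_i·1_{U_i} for some constant c, where γ_i = max^i(x−y) − max^{i+1}(x−y) > 0 (the i-th and (i+1)-th largest distinct values), and Σ_{i=1}^k γ_i = D. -/

import Mathlib

/-- The tropical symmetric distance on `ℝ^q`. -/
noncomputable def dtr (q : ℕ) [NeZero q] (x y : Fin q → ℝ) : ℝ :=
  (Finset.univ.sup' Finset.univ_nonempty fun i => y i - x i) -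
  (Finset.univ.inf' Finset.univ_nonempty fun i => y i - x i)

/-- The distinct values of `x − y`, sorted in increasing order. -/
noncomputable def sortedVals (q : ℕ) (x y : Fin q → ℝ) : List ℝ :=
  (Finset.image (fun a => x a - y a) Finset.univ).sort (· ≤ ·)

/-- `k`: one less than the number of distinct values of `x − y`. -/
noncomputable def numGaps (q : ℕ) (x y : Fin q → ℝ) : ℕ :=
  (Finset.image (fun a => x a - y a) Finset.univ).card - 1

theorem stmt17 (q : ℕ) [NeZero q] (x y : Fin q → ℝ)
    -- `x ≠ y` modulo the all-ones vector, i.e. `x − y` is non-constant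
    (hxy : ∃ a b : Fin q, x a - y a ≠ x b - y b) :
    -- with `l` the sorted distinct values, the `i`-th largest distinct value is
    -- `l[k−(i−1)]`; the gap `γ_i = max^i(x−y) − max^{i+1}(x−y)` is `l[k−i+1] − l[k−i]`,
    -- and `U_i = {a : x a − y a ≥ max^i}`.  Re-indexing over ascending positions:
    (∀ i < numGaps q x y,
        0 < (sortedVals q x y)[i + 1]! - (sortedVals q x y)[i]!) ∧
    (∑ i ∈ Finset.range (numGaps q x y),
        ((sortedVals q x y)[i + 1]! - (sortedVals q x y)[i]!)) = dtr q x y ∧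
    ∃ c : ℝ, ∀ a : Fin q,
      x a - y a = c + ∑ i ∈ Finset.range (numGaps q x y),
        ((sortedVals q x y)[i + 1]! - (sortedVals q x y)[i]!) *
          ({b : Fin q | (sortedVals q x y)[i + 1]! ≤ x b - y b}).indicator
            (fun _ => (1 : ℝ)) a := by
  classical
  obtain ⟨a0, b0, hab⟩ := hxy
  set S : Finset ℝ := Finset.image (fun a => x a - y a) Finset.univ with hS
  set l : List ℝ := sortedVals q x y with hl
  set k : ℕ := numGaps q x y with hk
  have hlen : l.length = S.card := Finset.length_sort _
  have h2 : 2 ≤ S.card := Finset.one_lt_card.mpr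
    ⟨_, Finset.mem_image_of_mem _ (Finset.mem_univ a0),
     _, Finset.mem_image_of_mem _ (Finset.mem_univ b0), hab⟩
  have hkS : S.card = k + 1 := by
    rw [hk, numGaps, ← hS]; omega
  have hlenk : l.length = k + 1 := by rw [hlen, hkS]
  have hsorted : l.SortedLT := Finset.sortedLT_sort S
  have hmono : ∀ i j : ℕ, i < j → j < l.length → l[i]! < l[j]! := by
    intro i j hij hj
    rw [getElem!_pos l i (by omega), getElem!_pos l j hj]
    have := hsorted.strictMono_get
      (a := ⟨i, by omega⟩) (b := ⟨j, hj⟩) (by exact hij)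
    simpa using this
  have hSne : S.Nonempty := Finset.card_pos.mp (by omega)
  -- identify the endpoints with min'/max'
  have hmin : S.min' hSne = l[0]! := by
    rw [getElem!_pos l 0 (by omega)]
    exact Finset.min'_eq_sorted_zero
  have hmax : S.max' hSne = l[k]! := by
    rw [getElem!_pos l k (by omega)]
    have := Finset.max'_eq_sorted_last (s := S) (h := hSne)
    rw [this]
    congr 1
    rw [show ((S.sort (· ≤ ·)).length) = l.length from rfl, hlenk]
    omega
  -- max'/min' as sup'/inf' of x - y
  have hsup : Finset.univ.sup' Finset.univ_nonempty (fun a => x a - y a) = S.max' hSne := by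
    rw [Finset.max'_eq_sup']
    exact (Finset.sup'_image hSne id).symm
  have hinf : Finset.univ.inf' Finset.univ_nonempty (fun a => x a - y a) = S.min' hSne := by
    rw [Finset.min'_eq_inf']
    exact (Finset.inf'_image hSne id).symm
  have hdtr : dtr q x y = l[k]! - l[0]! := by
    have e1 : Finset.univ.sup' Finset.univ_nonempty (fun i => y i - x i)
        = - Finset.univ.inf' Finset.univ_nonempty (fun a => x a - y a) := by
      apply le_antisymm
      · apply Finset.sup'_le
        intro i _
        have := Finset.inf'_le (fun a => x a - y a) (Finset.mem_univ i)
        linarith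
      · rw [neg_le]
        apply Finset.le_inf'
        intro i _
        have := Finset.le_sup' (fun a => y a - x a) (Finset.mem_univ i)
        linarith
    have e2 : Finset.univ.inf' Finset.univ_nonempty (fun i => y i - x i)
        = - Finset.univ.sup' Finset.univ_nonempty (fun a => x a - y a) := by
      apply le_antisymm
      · rw [le_neg]
        apply Finset.sup'_le
        intro i _
        have := Finset.inf'_le (fun a => y a - x a) (Finset.mem_univ i)
        linarith
      · apply Finset.le_inf'
        intro i _
        have := Finset.le_sup' (fun a => x a - y a) (Finset.mem_univ i)
        linarith
    rw [dtr, e1, e2, hsup, hinf, hmax, hmin]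
    ring
  refine ⟨?_, ?_, ?_⟩
  · intro i hi
    have := hmono i (i + 1) (by omega) (by omega)
    linarith
  · rw [Finset.sum_range_sub (fun i => l[i]!), hdtr]
  · refine ⟨l[0]!, fun a => ?_⟩
    have hmem : x a - y a ∈ l := by
      rw [hl, sortedVals, Finset.mem_sort]
      exact Finset.mem_image_of_mem _ (Finset.mem_univ a)
    obtain ⟨j, hj, hja⟩ := List.mem_iff_getElem.mp hmem
    have hja' : l[j]! = x a - y a := by rw [getElem!_pos l j hj]; exact hja
    have hcond : ∀ i < k, (l[i + 1]! ≤ x a - y a ↔ i < j) := by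
      intro i hi
      rw [← hja']
      constructor
      · intro h
        by_contra hc
        have : l[j]! < l[i + 1]! := hmono j (i + 1) (by omega) (by omega)
        linarith
      · intro h
        rcases Nat.lt_or_ge (i + 1) j with hlt | hge
        · exact le_of_lt (hmono (i + 1) j hlt hj)
        · have : i + 1 = j := by omega
          rw [this]
    have hstep : ∀ i ∈ Finset.range k,
        (l[i + 1]! - l[i]!) *
          ({b : Fin q | l[i + 1]! ≤ x b - y b}).indicator (fun _ => (1 : ℝ)) a
        = if i < j then (l[i + 1]! - l[i]!) else 0 := by
      intro i hi
      rw [Finset.mem_range] at hi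
      rw [Set.indicator_apply]
      simp only [Set.mem_setOf_eq]
      rw [if_congr (hcond i hi) rfl rfl]
      split <;> simp
    have hsum : ∑ i ∈ Finset.range k,
        (l[i + 1]! - l[i]!) *
          ({b : Fin q | l[i + 1]! ≤ x b - y b}).indicator (fun _ => (1 : ℝ)) a
        = ∑ i ∈ Finset.range j, (l[i + 1]! - l[i]!) := by
      rw [Finset.sum_congr rfl hstep, ← Finset.sum_filter]
      congr 1
      ext i
      simp only [Finset.mem_filter, Finset.mem_range]
      omega
    show x a - y a = l[0]! + ∑ i ∈ Finset.range k,
        (l[i + 1]! - l[i]!) *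
          ({b : Fin q | l[i + 1]! ≤ x b - y b}).indicator (fun _ => (1 : ℝ)) a
    rw [hsum, Finset.sum_range_sub (fun i => l[i]!), ← hja']
    ring
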